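/- Let r ≥ 1 and s ≥ 2 be integers, and let σ be a k-cycle on the set {1,…,r} (a permutation that cyclically permutes k distinct elements and fixes all others). Then the r×r permutation matrix of σ over ℤ_s can be expressed as a product of exactly k+1 toggle matrices over ℤ_s. -/

import Mathlib

/-- The `t`-toggle matrix over `ℤ_s`: obtained from `I_r` by replacing row `t` by the
row all of whose entries are `-1`. -/
def toggleMat (r s : ℕ) (t : Fin r) : Matrix (Fin r) (Fin r) (ZMod s) :=
  Matrix.of fun i j => if i = t then -1 else if i = j then 1 else 0

/-- A toggle matrix is a `t`-toggle matrix for some `t`. -/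
def IsToggleMat (r s : ℕ) (T : Matrix (Fin r) (Fin r) (ZMod s)) : Prop :=
  ∃ t : Fin r, T = toggleMat r s t

lemma mul_toggleMat {r s : ℕ} (A : Matrix (Fin r) (Fin r) (ZMod s)) (t : Fin r) (i j : Fin r) :
    (A * toggleMat r s t) i j = (if j = t then 0 else A i j) - A i t := by
  rw [Matrix.mul_apply]
  have key : ∀ l : Fin r, A i l * toggleMat r s t l j
      = (if l = j then (if j = t then 0 else A i j) else 0) + (if l = t then -(A i t) else 0) := by
    intro l
    simp only [toggleMat, Matrix.of_apply]
    by_cases hlt : l = t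
    · subst hlt
      by_cases hlj : l = j
      · subst hlj; simp
      · simp [hlj, Ne.symm hlj]
    · by_cases hlj : l = j
      · subst hlj; simp [hlt]
      · simp [hlt, hlj]
  simp only [key, Finset.sum_add_distrib, Finset.sum_ite_eq', Finset.mem_univ, if_true]
  ring

/-- If `σ` is a `k`-cycle on `{1, …, r}`, then the `r × r` permutation matrix of `σ`
over `ℤ_s` is a product of exactly `k + 1` toggle matrices. -/
theorem cycle_permMatrix_eq_prod_toggle (r s k : ℕ) (hr : 1 ≤ r) (hs : 2 ≤ s)
    (σ : Equiv.Perm (Fin r)) (hσ : σ.IsCycle) (hk : σ.support.card = k) :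
    ∃ L : List (Matrix (Fin r) (Fin r) (ZMod s)),
      L.length = k + 1 ∧ (∀ T ∈ L, IsToggleMat r s T) ∧
      L.prod = Matrix.of fun i j => if σ j = i then (1 : ZMod s) else 0 := by
  classical
  obtain ⟨a, ha, -⟩ := id hσ
  set τ := σ⁻¹ with hτdef
  have hτa : τ a ≠ a := by
    intro h
    apply ha
    have := congrArg σ h
    simpa [hτdef] using this.symm
  have hτc : τ.IsCycle := hσ.inv
  have hord : orderOf τ = k := by
    rw [hτc.orderOf, hτdef, Equiv.Perm.support_inv, hk]
  have hk1 : 1 ≤ k := by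
    rw [← hk]
    exact Finset.card_pos.2 ⟨a, Equiv.Perm.mem_support.2 ha⟩
  have hfix : ∀ n : ℕ, (τ ^ n) a = a ↔ k ∣ n := by
    intro n
    rw [← hτc.pow_eq_one_iff' hτa, ← hord, orderOf_dvd_iff_pow_eq_one]
  have hinj : ∀ p q : ℕ, p < k → q < k → (τ ^ p) a = (τ ^ q) a → p = q := by
    have step : ∀ p q : ℕ, p ≤ q → q < k → (τ ^ p) a = (τ ^ q) a → p = q := by
      intro p q hle hq h
      obtain ⟨d, rfl⟩ := Nat.exists_eq_add_of_le hle
      have hda : (τ ^ d) a = a := by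
        have h2 : (τ ^ p) a = (τ ^ p) ((τ ^ d) a) := by
          rw [h, pow_add]; rfl
        exact ((τ ^ p).injective h2).symm
      have hd0 : d = 0 := Nat.eq_zero_of_dvd_of_lt ((hfix d).1 hda) (by omega)
      omega
    intro p q hp hq h
    rcases le_total p q with hle | hle
    · exact step p q hle hq h
    · exact (step q p hle hp h.symm).symm
  have hpow : ∀ p : ℕ, τ ((τ ^ p) a) = (τ ^ (p + 1)) a := by
    intro p
    rw [← Equiv.Perm.mul_apply, ← pow_succ']
  have hmem : ∀ i : Fin r, σ i ≠ i → ∃ p, p < k ∧ i = (τ ^ p) a := by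
    intro i hi
    have hτi : τ i ≠ i := by
      intro h
      apply hi
      have := congrArg σ h
      simpa [hτdef] using this.symm
    obtain ⟨n, hn⟩ := hτc.exists_pow_eq hτa hτi
    refine ⟨n % k, Nat.mod_lt _ (by omega), ?_⟩
    rw [← hn, ← hord, pow_mod_orderOf]
  have main : ∀ m : ℕ, 1 ≤ m → m ≤ k →
      ((List.range m).map fun p => toggleMat r s ((τ ^ p) a)).prod
        = Matrix.of fun i j =>
            if i = (τ ^ (m - 1)) a then -1
            else if ∃ p, p + 1 < m ∧ i = (τ ^ p) a then (if j = τ i then 1 else 0)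
            else if i = j then 1 else 0 := by
    intro m
    induction m with
    | zero => omega
    | succ n ih =>
      intro _ hle
      rcases Nat.lt_or_ge n 1 with h1 | hn1
      · -- base case n = 0
        have hn0 : n = 0 := by omega
        subst hn0
        ext i j
        have hne : ¬ ∃ p, p + 1 < 0 + 1 ∧ i = (τ ^ p) a := by rintro ⟨p, hp, -⟩; omega
        simp only [List.range_succ, List.range_zero, List.map_append, List.map_nil,
          List.map_singleton, List.nil_append, List.prod_singleton, toggleMat,
          Matrix.of_apply, pow_zero, Equiv.Perm.coe_one, id_eq, Nat.add_sub_cancel, hne, if_false]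
      · -- inductive step, n ≥ 1
        have hnk : n < k := by omega
        have ihh := ih hn1 (by omega)
        rw [List.range_succ, List.map_append, List.prod_append, List.map_singleton,
          List.prod_singleton, ihh]
        ext i j
        rw [mul_toggleMat]
        simp only [Matrix.of_apply, Nat.add_sub_cancel]
        have hbt : ¬ ((τ ^ (n - 1)) a = (τ ^ n) a) := by
          intro h
          have := hinj (n - 1) n (by omega) hnk h
          omega
        have htb : ¬ ((τ ^ n) a = (τ ^ (n - 1)) a) := fun h => hbt h.symm
        have hτb : τ ((τ ^ (n - 1)) a) = (τ ^ n) a := by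
          rw [hpow]
          congr 2
          omega
        by_cases hit : i = (τ ^ n) a
        · -- i is the new (-1)-row
          have h2 : ¬ ∃ p, p + 1 < n ∧ (τ ^ n) a = (τ ^ p) a := by
            rintro ⟨p, hp, hip⟩
            have := hinj n p hnk (by omega) hip
            omega
          by_cases hjt : j = (τ ^ n) a
          · simp [hit, hjt, htb, h2]
          · have htj : ¬ ((τ ^ n) a = j) := fun h => hjt h.symm
            simp [hit, hjt, htb, h2, htj]
        · by_cases hib : i = (τ ^ (n - 1)) a
          · -- i is the old (-1)-row, becomes e_t
            have hex : ∃ p, p + 1 < n + 1 ∧ (τ ^ (n - 1)) a = (τ ^ p) a :=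
              ⟨n - 1, by omega, rfl⟩
            have hex2 : ∃ p, p < n ∧ (τ ^ (n - 1)) a = (τ ^ p) a :=
              ⟨n - 1, by omega, rfl⟩
            by_cases hjt : j = (τ ^ n) a
            · simp [hib, hbt, hex, hex2, hτb, hjt]
            · simp [hib, hbt, hex, hex2, hτb, hjt]
              try ring
          · by_cases hold : ∃ p, p + 1 < n ∧ i = (τ ^ p) a
            · -- middle rows, unchanged
              obtain ⟨p, hp, hip⟩ := hold
              have hCn : ¬ ((τ ^ p) a = (τ ^ n) a) := by
                intro h
                have := hinj p n (by omega) hnk h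
                omega
              have hCb : ¬ ((τ ^ p) a = (τ ^ (n - 1)) a) := by
                intro h
                have := hinj p (n - 1) (by omega) (by omega) h
                omega
              have hCold : ∃ q, q + 1 < n ∧ (τ ^ p) a = (τ ^ q) a := ⟨p, hp, rfl⟩
              have hex : ∃ q, q + 1 < n + 1 ∧ (τ ^ p) a = (τ ^ q) a := ⟨p, by omega, rfl⟩
              have hex2 : ∃ q, q < n ∧ (τ ^ p) a = (τ ^ q) a := ⟨p, by omega, rfl⟩
              have hCt : ¬ ((τ ^ (p + 1)) a = (τ ^ n) a) := by
                intro h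
                have := hinj (p + 1) n (by omega) hnk h
                omega
              have hCt2 : ¬ ((τ ^ n) a = (τ ^ (p + 1)) a) := fun h => hCt h.symm
              by_cases hjs : j = (τ ^ (p + 1)) a
              · have hjt : ¬ ((τ ^ (p + 1)) a = (τ ^ n) a) := hCt
                simp [hip, hCn, hCb, hCold, hex, hex2, hpow, hCt, hCt2, hjs, hjt]
              · by_cases hjt : j = (τ ^ n) a <;>
                  simp [hip, hCn, hCb, hCold, hex, hex2, hpow, hCt, hCt2, hjs, hjt]
            · -- fixed rows
              have hex : ¬ ∃ p, p + 1 < n + 1 ∧ i = (τ ^ p) a := by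
                rintro ⟨p, hp, hip⟩
                rcases Nat.lt_or_ge (p + 1) n with h | h
                · exact hold ⟨p, h, hip⟩
                · have hpn : p = n - 1 ∨ p = n := by omega
                  rcases hpn with rfl | rfl
                  · exact hib hip
                  · exact hit hip
              have hex2 : ¬ ∃ p, p < n ∧ i = (τ ^ p) a := by
                rintro ⟨p, hp, hip⟩
                exact hex ⟨p, by omega, hip⟩
              by_cases hjt : j = (τ ^ n) a
              · have hij : ¬ (i = (τ ^ n) a) := hit
                simp [hit, hib, hold, hex, hex2, hjt, hij]
              · by_cases hij : i = j
                · subst hij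
                  simp [hit, hib, hold, hex, hex2, hjt]
                · simp [hit, hib, hold, hex, hex2, hjt, hij]
  -- assemble
  refine ⟨((List.range k).map fun p => toggleMat r s ((τ ^ p) a)) ++ [toggleMat r s a],
    by simp, ?_, ?_⟩
  · intro T hT
    simp only [List.mem_append, List.mem_map, List.mem_singleton] at hT
    rcases hT with ⟨p, -, rfl⟩ | rfl
    · exact ⟨_, rfl⟩
    · exact ⟨a, rfl⟩
  · rw [List.prod_append, List.prod_singleton, main k hk1 le_rfl]
    ext i j
    rw [mul_toggleMat]
    simp only [Matrix.of_apply]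
    have hka : (τ ^ k) a = a := (hfix k).2 dvd_rfl
    have hτlast : τ ((τ ^ (k - 1)) a) = a := by
      rw [hpow]
      have : k - 1 + 1 = k := by omega
      rw [this, hka]
    by_cases hil : i = (τ ^ (k - 1)) a
    · -- last row becomes e_a
      have hcond : ∀ j' : Fin r, (σ j' = (τ ^ (k - 1)) a) ↔ (j' = a) := by
        intro j'
        constructor
        · intro h
          have := congrArg τ h
          rw [hτlast] at this
          rw [← this, hτdef]
          simp
        · intro h
          subst h
          have := congrArg σ hτlast
          simpa [hτdef] using this.symm
      have hsa : σ a = (τ ^ (k - 1)) a := (hcond a).2 rfl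
      by_cases hja : j = a
      · simp [hil, hja, hτlast, hsa]
      · have h1 : ¬ (σ j = i) := by
          rw [hil]
          exact fun h => hja ((hcond j).1 h)
        rw [if_neg h1]
        simp [hil, hja]
        try ring
    · by_cases hex : ∃ p, p + 1 < k ∧ i = (τ ^ p) a
      · -- middle rows
        obtain ⟨p, hp, hip⟩ := hex
        have hBn : ¬ ((τ ^ p) a = (τ ^ (k - 1)) a) := by
          intro h
          have := hinj p (k - 1) (by omega) (by omega) h
          omega
        have hBex : ∃ q, q + 1 < k ∧ (τ ^ p) a = (τ ^ q) a := ⟨p, hp, rfl⟩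
        have hBa : ¬ ((τ ^ (p + 1)) a = a) := by
          intro h
          have h0 : (τ ^ (p + 1)) a = (τ ^ 0) a := by simpa using h
          have := hinj (p + 1) 0 (by omega) (by omega) h0
          omega
        have hBa2 : ¬ (a = (τ ^ (p + 1)) a) := fun h => hBa h.symm
        have hcond : ∀ j' : Fin r, (σ j' = (τ ^ p) a) ↔ (j' = (τ ^ (p + 1)) a) := by
          intro j'
          constructor
          · intro h
            have := congrArg τ h
            rw [hpow] at this
            rw [← this, hτdef]
            simp
          · intro h
            subst h
            have := congrArg σ (hpow p)
            simpa [hτdef] using this.symm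
        have hsj : σ ((τ ^ (p + 1)) a) = (τ ^ p) a := (hcond _).2 rfl
        by_cases hjs : j = (τ ^ (p + 1)) a
        · have hja : ¬ ((τ ^ (p + 1)) a = a) := hBa
          simp [hip, hjs, hBn, hBex, hpow, hBa, hBa2, hja, hsj]
        · have h1 : ¬ (σ j = i) := by
            rw [hip]
            exact fun h => hjs ((hcond j).1 h)
          rw [if_neg h1]
          by_cases hja : j = a <;>
            simp [hip, hjs, hBn, hBex, hpow, hBa, hBa2, hja]
      · -- fixed rows
        have hall : ∀ p, p < k → ¬ i = (τ ^ p) a := by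
          intro p hpk hip
          rcases Nat.lt_or_ge (p + 1) k with h | h
          · exact hex ⟨p, h, hip⟩
          · have : p = k - 1 := by omega
            subst this
            exact hil hip
        have hfix2 : σ i = i := by
          by_contra h
          obtain ⟨p, hpk, hip⟩ := hmem i h
          exact hall p hpk hip
        have hia : ¬ i = a := by
          have := hall 0 hk1
          simpa using this
        have hτi : τ i = i := by
          rw [hτdef]
          exact (Equiv.Perm.inv_eq_iff_eq).2 hfix2.symm
        have hcond : (σ j = i) ↔ (i = j) := by
          constructor
          · intro h
            have h2 := congrArg τ h
            rw [hτdef] at h2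
            rw [← Equiv.Perm.mul_apply, inv_mul_cancel, Equiv.Perm.one_apply] at h2
            rw [← hτdef] at h2
            rw [hτi] at h2
            exact h2.symm
          · intro h
            rw [← h, hfix2]
        by_cases hja : j = a
        · rw [if_neg (fun h => hia ((hcond.1 h).trans hja))]
          simp [hil, hex, hja, hia]
        · by_cases hij : i = j
          · rw [if_pos (hcond.2 hij)]
            subst hij
            simp [hil, hex, hja, hia]
          · rw [if_neg (fun h => hij (hcond.1 h))]
            simp [hil, hex, hja, hij, hia]
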